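/- Let J : ℝ → ℝ be a compactly supported piecewise affine function with J'(t) = δ(t) − 1_{[-1,0]}(t) in the distributional sense, let q be a complex quadratic form on ℝ^{2n} with Re q ≥ 0, T > 0, and define G(X) = −∫_{-∞}^{+∞} J(−t/T) Re q(e^{tH_{Im q}}X) dt. Then H_{Im q}G = ⟨Re q⟩_{T,Im q} − Re q, where ⟨Re q⟩_{T,Im q}(X) = (1/T)∫₀^T Re q(e^{tH_{Im q}}X) dt. -/

import Mathlib

open MeasureTheory

/-- A compactly supported piecewise affine function solving `J'(t) = δ(t) − 1_{[-1,0]}(t)`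
in the distributional sense: `J(t) = -(t+1)` on `[-1,0]` and `0` elsewhere. -/
noncomputable def Jfun : ℝ → ℝ := Set.indicator (Set.Icc (-1 : ℝ) 0) (fun s => -(s + 1))

set_option synthInstance.maxHeartbeats 1000000 in
private lemma exp_smul_mul {n : ℕ}
    (ImF : EuclideanSpace ℝ (Fin (2 * n)) →L[ℝ] EuclideanSpace ℝ (Fin (2 * n))) (t s : ℝ) :
    NormedSpace.exp ((2 * (t + s)) • ImF)
      = NormedSpace.exp ((2 * t) • ImF) * NormedSpace.exp ((2 * s) • ImF) := by
  have hc : Commute ((2 * t) • ImF) ((2 * s) • ImF) := by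
    unfold Commute SemiconjBy
    refine ContinuousLinearMap.ext fun v => ?_
    simp only [ContinuousLinearMap.mul_apply, ContinuousLinearMap.smul_apply, _root_.map_smul,
      smul_smul]
    ring_nf
  letI : NormedAlgebra ℚ (EuclideanSpace ℝ (Fin (2 * n)) →L[ℝ] EuclideanSpace ℝ (Fin (2 * n))) :=
    NormedAlgebra.restrictScalars ℚ ℝ _
  rw [show (2 * (t + s)) • ImF = (2 * t) • ImF + (2 * s) • ImF by module,
    NormedSpace.exp_add_of_commute hc]

set_option synthInstance.maxHeartbeats 1000000 in
private lemma exp_zero_smul {n : ℕ}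
    (ImF : EuclideanSpace ℝ (Fin (2 * n)) →L[ℝ] EuclideanSpace ℝ (Fin (2 * n))) :
    NormedSpace.exp ((2 * (0:ℝ)) • ImF) = 1 := by
  rw [show (2 * (0:ℝ)) • ImF = 0 by module, NormedSpace.exp_zero]

/-- Let `q` be a complex quadratic form on `ℝ^{2n}` with `Re q ≥ 0` (with polarization
`Bq` of `Re q`, so `Re q(X) = Bq X X`), and let `Im F` be the imaginary part of its
Hamilton map, so that `e^{tH_{Im q}} = e^{2t Im F}`.  For `T > 0`, set
`G(X) = −∫ J(−t/T) Re q(e^{tH_{Im q}}X) dt`.  Then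
`H_{Im q}G = ⟨Re q⟩_{T,Im q} − Re q`, where `H_{Im q}G(X)` is the derivative at `s = 0` of
`s ↦ G(e^{sH_{Im q}}X)` and `⟨Re q⟩_{T,Im q}(X) = (1/T)∫₀^T Re q(e^{tH_{Im q}}X) dt`. -/
theorem stmt_9 (n : ℕ) (T : ℝ) (hT : 0 < T)
    (ImF : EuclideanSpace ℝ (Fin (2 * n)) →L[ℝ] EuclideanSpace ℝ (Fin (2 * n)))
    (Bq : EuclideanSpace ℝ (Fin (2 * n)) →ₗ[ℝ] EuclideanSpace ℝ (Fin (2 * n)) →ₗ[ℝ] ℝ)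
    (hBsymm : ∀ X Y, Bq X Y = Bq Y X)
    (hpos : ∀ X, 0 ≤ Bq X X)
    (X : EuclideanSpace ℝ (Fin (2 * n))) :
    HasDerivAt
      (fun s : ℝ =>
        -∫ t : ℝ, Jfun (-t / T) *
          Bq (NormedSpace.exp ((2 * t) • ImF) (NormedSpace.exp ((2 * s) • ImF) X))
             (NormedSpace.exp ((2 * t) • ImF) (NormedSpace.exp ((2 * s) • ImF) X)))
      ((1 / T) * (∫ t in (0:ℝ)..T,
          Bq (NormedSpace.exp ((2 * t) • ImF) X) (NormedSpace.exp ((2 * t) • ImF) X))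
        - Bq X X)
      0 := by
  have hT0 : T ≠ 0 := hT.ne'
  set Φ : ℝ → (EuclideanSpace ℝ (Fin (2 * n)) →L[ℝ] EuclideanSpace ℝ (Fin (2 * n))) :=
    fun u : ℝ => NormedSpace.exp ((2 * u) • ImF) with hΦ
  -- flow property
  have hflow : ∀ t s : ℝ, Φ t (Φ s X) = Φ (t + s) X := by
    intro t s
    have h1 : Φ (t + s) = Φ t * Φ s := exp_smul_mul ImF t s
    rw [h1]; rfl
  have hΦ0 : Φ 0 X = X := by
    rw [hΦ]
    simp only [exp_zero_smul, ContinuousLinearMap.one_apply]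
  set f : ℝ → ℝ := fun u => Bq (Φ u X) (Φ u X) with hfdef
  -- continuity of f
  letI : NormedAlgebra ℚ (EuclideanSpace ℝ (Fin (2 * n)) →L[ℝ] EuclideanSpace ℝ (Fin (2 * n))) :=
    NormedAlgebra.restrictScalars ℚ ℝ _
  have hΦc : Continuous Φ :=
    NormedSpace.exp_continuous.comp ((continuous_const.mul continuous_id).smul continuous_const)
  have hv : Continuous fun u : ℝ => Φ u X := hΦc.clm_apply continuous_const
  have hBc : Continuous fun x : EuclideanSpace ℝ (Fin (2 * n)) =>
      LinearMap.toContinuousLinearMap (Bq x) :=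
    ((LinearMap.toContinuousLinearMap :
        (EuclideanSpace ℝ (Fin (2 * n)) →ₗ[ℝ] ℝ) ≃ₗ[ℝ]
          (EuclideanSpace ℝ (Fin (2 * n)) →L[ℝ] ℝ)).toLinearMap.comp
      Bq).continuous_of_finiteDimensional
  have hfc : Continuous f := by
    have : Continuous fun u : ℝ =>
        (LinearMap.toContinuousLinearMap (Bq (Φ u X))) (Φ u X) :=
      (hBc.comp hv).clm_apply hv
    simpa using this
  have hgc : Continuous fun u : ℝ => u * f u := continuous_id.mul hfc
  set F1 : ℝ → ℝ := fun x => ∫ t in (0:ℝ)..x, f t with hF1def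
  set F2 : ℝ → ℝ := fun x => ∫ t in (0:ℝ)..x, t * f t with hF2def
  -- the explicit form of G ∘ flow
  have hEq : ∀ s : ℝ,
      (-∫ t : ℝ, Jfun (-t / T) * Bq (Φ t (Φ s X)) (Φ t (Φ s X)))
        = (s / T + 1) * (F1 (T + s) - F1 s) - (1 / T) * (F2 (T + s) - F2 s) := by
    intro s
    have h1 : ∀ t : ℝ, Jfun (-t / T) * Bq (Φ t (Φ s X)) (Φ t (Φ s X))
        = Set.indicator (Set.Icc (0:ℝ) T) (fun t => (t / T - 1) * f (t + s)) t := by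
      intro t
      rw [hflow]
      by_cases ht : t ∈ Set.Icc (0:ℝ) T
      · obtain ⟨ht0, htT⟩ := ht
        have hmem : -t / T ∈ Set.Icc (-1 : ℝ) 0 := by
          constructor
          · rw [neg_div, neg_le_neg_iff, div_le_one hT]; exact htT
          · rw [neg_div, neg_nonpos]; positivity
        rw [Set.indicator_of_mem (Set.mem_Icc.mpr ⟨ht0, htT⟩), Jfun, Set.indicator_of_mem hmem]
        have : -(-t / T + 1) = t / T - 1 := by ring
        rw [this]
      · have hmem : -t / T ∉ Set.Icc (-1 : ℝ) 0 := by
          simp only [Set.mem_Icc, not_and_or, not_le] at ht ⊢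
          rcases ht with h | h
          · right
            rw [neg_div]
            have h2 : 0 < (-t) / T := div_pos (by linarith) hT
            rw [neg_div] at h2
            linarith
          · left
            rw [neg_div]
            have h2 : 1 < t / T := (one_lt_div hT).mpr h
            linarith
        rw [Set.indicator_of_notMem ht, Jfun, Set.indicator_of_notMem hmem, zero_mul]
    simp_rw [h1]
    rw [MeasureTheory.integral_indicator measurableSet_Icc,
      MeasureTheory.integral_Icc_eq_integral_Ioc,
      ← intervalIntegral.integral_of_le hT.le]
    have h2 : (∫ t in (0:ℝ)..T, (t / T - 1) * f (t + s))
        = ∫ u in s..(T + s), ((u - s) / T - 1) * f u := by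
      rw [show (fun t : ℝ => (t / T - 1) * f (t + s))
          = fun t : ℝ => ((fun u : ℝ => ((u - s) / T - 1) * f u) (t + s)) by
        funext t; simp [add_sub_cancel_right]]
      rw [intervalIntegral.integral_comp_add_right (fun u : ℝ => ((u - s) / T - 1) * f u) s]
      norm_num
    rw [h2]
    have h3 : ∀ u : ℝ, ((u - s) / T - 1) * f u
        = (1 / T) * (u * f u) - (s / T + 1) * f u := by
      intro u; field_simp; ring
    simp_rw [h3]
    rw [intervalIntegral.integral_sub ((hgc.intervalIntegrable _ _).const_mul _)
        ((hfc.intervalIntegrable _ _).const_mul _),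
      intervalIntegral.integral_const_mul, intervalIntegral.integral_const_mul]
    have h4 : (∫ u in s..(T + s), f u) = F1 (T + s) - F1 s := by
      rw [hF1def]
      exact (intervalIntegral.integral_interval_sub_left (hfc.intervalIntegrable _ _)
        (hfc.intervalIntegrable _ _)).symm
    have h5 : (∫ u in s..(T + s), u * f u) = F2 (T + s) - F2 s := by
      rw [hF2def]
      exact (intervalIntegral.integral_interval_sub_left (hgc.intervalIntegrable _ _)
        (hgc.intervalIntegrable _ _)).symm
    rw [h4, h5]; ring
  -- derivative of the explicit form at 0
  have hd1 : HasDerivAt (fun s : ℝ => s / T + 1) (1 / T) 0 := by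
    simpa using ((hasDerivAt_id (0:ℝ)).div_const T).add_const 1
  have hshift : HasDerivAt (fun s : ℝ => T + s) 1 0 := by
    simpa using (hasDerivAt_id (0:ℝ)).const_add T
  have hF1T : HasDerivAt (fun s : ℝ => F1 (T + s)) (f (T + 0)) 0 := by
    have := ((hfc.integral_hasStrictDerivAt 0 (T + 0)).hasDerivAt.comp 0 hshift)
    rw [add_zero]; simp at this; exact this
  have hF10 : HasDerivAt F1 (f 0) 0 := (hfc.integral_hasStrictDerivAt 0 0).hasDerivAt
  have hF2T : HasDerivAt (fun s : ℝ => F2 (T + s)) ((T + 0) * f (T + 0)) 0 := by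
    have := ((hgc.integral_hasStrictDerivAt 0 (T + 0)).hasDerivAt.comp 0 hshift)
    rw [add_zero]; simp at this; exact this
  have hF20 : HasDerivAt F2 ((0:ℝ) * f 0) 0 := (hgc.integral_hasStrictDerivAt 0 0).hasDerivAt
  have hG : HasDerivAt
      (fun s : ℝ => (s / T + 1) * (F1 (T + s) - F1 s) - (1 / T) * (F2 (T + s) - F2 s))
      ((1 / T) * (∫ t in (0:ℝ)..T, f t) - f 0) 0 := by
    have h := (hd1.mul (hF1T.sub hF10)).sub ((hF2T.sub hF20).const_mul (1 / T))
    convert h using 1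
    · rfl
    · rfl
    · rfl
    have hF1z : F1 0 = 0 := intervalIntegral.integral_same
    have hFT : F1 (T + 0) = ∫ t in (0:ℝ)..T, f t := by rw [add_zero]
    simp only [Pi.sub_apply]
    rw [hFT, hF1z]
    field_simp
    ring
  -- conclude
  have hfun : (fun s : ℝ => -∫ t : ℝ, Jfun (-t / T) * Bq (Φ t (Φ s X)) (Φ t (Φ s X)))
      = fun s : ℝ => (s / T + 1) * (F1 (T + s) - F1 s) - (1 / T) * (F2 (T + s) - F2 s) :=
    funext hEq
  have hf0 : f 0 = Bq X X := by
    rw [hfdef]; simp only [hΦ0]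
  rw [hfun, ← hf0]
  exact hG
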